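/- Let c*, h*, V_tot be positive constants and let R, U : I → ℝ be differentiable on an interval I with R'(t) = U(t), (V_tot − π·R(t)²·h*)·U'(t) = 2π·R(t)·h*·(U(t)² − c*²), c*² − U(t)² > 0 and V_tot − π·R(t)²·h* > 0 on I. Fix τ ∈ I and set β² = ( c*² − U(τ)² )·( V_tot − π·R(τ)²·h* )². Then for all t ∈ I one has ( c*² − U(t)² )·( V_tot − π·R(t)²·h* )² = β², and consequently ( R'(t) )² = c*² − β² / ( V_tot − π·R(t)²·h* )². -/

import Mathlib

open Real

/-- For the Regime-2 rim-lamella system, the quantity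
`(c*² − U²)·(V_tot − πR²h*)²` is conserved, equal to its initial value `β²`; and
consequently `(R')² = c*² − β²/(V_tot − πR²h*)²`. -/
theorem regime2_conserved_quantity
    (cstar hstar Vtot τ : ℝ) (hc : cstar > 0) (hh : hstar > 0) (hV : Vtot > 0)
    (I : Set ℝ) (hI : I.OrdConnected) (hτ : τ ∈ I)
    (R U : ℝ → ℝ)
    (hR : ∀ t ∈ I, HasDerivAt R (U t) t)
    (hU : ∀ t ∈ I, DifferentiableAt ℝ U t)
    (hmom : ∀ t ∈ I,
      (Vtot - π * R t ^ 2 * hstar) * deriv U t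
        = 2 * π * R t * hstar * (U t ^ 2 - cstar ^ 2))
    (hU2 : ∀ t ∈ I, cstar ^ 2 - U t ^ 2 > 0)
    (hV2 : ∀ t ∈ I, Vtot - π * R t ^ 2 * hstar > 0) :
    ∀ t ∈ I,
      (cstar ^ 2 - U t ^ 2) * (Vtot - π * R t ^ 2 * hstar) ^ 2
          = (cstar ^ 2 - U τ ^ 2) * (Vtot - π * R τ ^ 2 * hstar) ^ 2
      ∧ (deriv R t) ^ 2
          = cstar ^ 2
            - (cstar ^ 2 - U τ ^ 2) * (Vtot - π * R τ ^ 2 * hstar) ^ 2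
                / (Vtot - π * R t ^ 2 * hstar) ^ 2 := by
  set F : ℝ → ℝ := fun t => (cstar ^ 2 - U t ^ 2) * (Vtot - π * R t ^ 2 * hstar) ^ 2 with hF
  have hconv : Convex ℝ I := hI.convex
  have hF' : ∀ t ∈ I, HasDerivWithinAt F 0 I t := by
    intro t ht
    have hUd : HasDerivAt U (deriv U t) t := (hU t ht).hasDerivAt
    have h1 : HasDerivAt (fun s => cstar ^ 2 - U s ^ 2)
        (-(2 * U t * deriv U t)) t := by
      simpa using ((hUd.pow 2).const_sub (cstar ^ 2))
    have h2 : HasDerivAt (fun s => (Vtot - π * R s ^ 2 * hstar) ^ 2)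
        (2 * (Vtot - π * R t ^ 2 * hstar) ^ 1 * (-(π * (2 * R t ^ 1 * U t) * hstar))) t := by
      exact ((((hR t ht).pow 2).const_mul π).mul_const hstar).const_sub Vtot |>.pow 2
    have hmul := h1.mul h2
    have hkey : (-(2 * U t * deriv U t)) * (Vtot - π * R t ^ 2 * hstar) ^ 2
        + (cstar ^ 2 - U t ^ 2) *
          (2 * (Vtot - π * R t ^ 2 * hstar) ^ 1 * (-(π * (2 * R t ^ 1 * U t) * hstar))) = 0 := by
      have hm := hmom t ht
      linear_combination (-(2 * U t) * (Vtot - π * R t ^ 2 * hstar)) * hm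
    have := hmul
    rw [hkey] at this
    exact this.hasDerivWithinAt
  have hconst : ∀ t ∈ I, F t = F τ := by
    intro t ht
    have bound : ∀ x ∈ I, ‖(0 : ℝ)‖ ≤ 0 := by simp
    have := hconv.norm_image_sub_le_of_norm_hasDerivWithin_le
      (f' := fun _ => (0 : ℝ)) (fun x hx => hF' x hx) bound hτ ht
    have h0 : ‖F t - F τ‖ ≤ 0 := by simpa using this
    have := norm_nonneg (F t - F τ)
    have : ‖F t - F τ‖ = 0 := le_antisymm h0 this
    have := norm_eq_zero.mp this
    linarith [sub_eq_zero.mp this]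
  intro t ht
  have hc1 := hconst t ht
  simp only [hF] at hc1
  refine ⟨hc1, ?_⟩
  have hdR : deriv R t = U t := (hR t ht).deriv
  have hVpos := hV2 t ht
  have hVne : (Vtot - π * R t ^ 2 * hstar) ^ 2 ≠ 0 := pow_ne_zero 2 (ne_of_gt hVpos)
  rw [hdR, ← hc1]
  field_simp
  ring
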